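/- Let λ ≥ 0 and Ā_C, Ā_E, J, Q be reals with 0 < Ā_C ≤ Ā_E, satisfying 4J² + Q⁴ = Ā_C Ā_E [1 + 2λ(Ā_C + Ā_E + Q²) + λ²(Ā_C² + Ā_C Ā_E + Ā_E²)]. Then 4J² + Q⁴ ≤ Ā_E² [1 + 2λ(2Ā_E + Q²) + 3λ²Ā_E²], with equality if and only if Ā_C = Ā_E. -/
import Mathlib


theorem stmt_3 (lam AC AE J Q : ℝ) (hlam : 0 ≤ lam)
    (hAC : 0 < AC) (hle : AC ≤ AE)
    (heq : 4 * J ^ 2 + Q ^ 4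
      = AC * AE * (1 + 2 * lam * (AC + AE + Q ^ 2)
          + lam ^ 2 * (AC ^ 2 + AC * AE + AE ^ 2))) :
    4 * J ^ 2 + Q ^ 4 ≤ AE ^ 2 * (1 + 2 * lam * (2 * AE + Q ^ 2) + 3 * lam ^ 2 * AE ^ 2)
    ∧ (4 * J ^ 2 + Q ^ 4 = AE ^ 2 * (1 + 2 * lam * (2 * AE + Q ^ 2) + 3 * lam ^ 2 * AE ^ 2)
        ↔ AC = AE) := by
  have hAE : 0 < AE := lt_of_lt_of_le hAC hle
  set B : ℝ := 1 + 2 * lam * (2 * AE + AC + Q ^ 2)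
      + lam ^ 2 * (3 * AE ^ 2 + 2 * AC * AE + AC ^ 2) with hB
  have hBpos : 0 < B := by
    have h1 : 0 ≤ 2 * lam * (2 * AE + AC + Q ^ 2) := by positivity
    have h2 : 0 ≤ lam ^ 2 * (3 * AE ^ 2 + 2 * AC * AE + AC ^ 2) := by positivity
    linarith
  have hfac : AE ^ 2 * (1 + 2 * lam * (2 * AE + Q ^ 2) + 3 * lam ^ 2 * AE ^ 2)
      - (4 * J ^ 2 + Q ^ 4) = AE * (AE - AC) * B := by
    rw [heq, hB]; ring
  have hD : 0 ≤ AE * (AE - AC) * B := by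
    have : 0 ≤ AE - AC := by linarith
    positivity
  constructor
  · linarith
  · constructor
    · intro h
      have hz : AE * (AE - AC) * B = 0 := by linarith
      rcases mul_eq_zero.mp hz with h1 | h2
      · rcases mul_eq_zero.mp h1 with h3 | h4
        · linarith
        · linarith
      · exact absurd h2 (ne_of_gt hBpos)
    · intro h; subst h; linarith
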